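/- Let v₁, v₂, q be polynomials in two real variables and set v = (v₁, v₂). Let p, d, n ∈ ℝ² with d ≠ 0, n ≠ 0 and d·n = 0. Assume that for every t ∈ [0,1] one has v(p + t d) = 0, (n·∇)v(p + t d) = 0 and (n·∇)²v(p + t d) = 0, where (n·∇) denotes the directional derivative along n applied to each component. Assume moreover that −Δv + ∇q = 0 and div v = 0 hold identically on ℝ². Then v₁ and v₂ are identically zero and q is a constant polynomial. -/

import Mathlib

open MvPolynomial

/-- The directional derivative `(n·∇)f = n₀ ∂f/∂x + n₁ ∂f/∂y` of a polynomial in two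
variables along the direction `n ∈ ℝ²`. -/
noncomputable def dirDeriv (n : Fin 2 → ℝ) (f : MvPolynomial (Fin 2) ℝ) :
    MvPolynomial (Fin 2) ℝ :=
  C (n 0) * pderiv 0 f + C (n 1) * pderiv 1 f

namespace EdgeAux

lemma dirDeriv_add (e : Fin 2 → ℝ) (f g : MvPolynomial (Fin 2) ℝ) :
    dirDeriv e (f + g) = dirDeriv e f + dirDeriv e g := by
  simp only [dirDeriv, map_add]; ring

lemma dirDeriv_C (e : Fin 2 → ℝ) (a : ℝ) : dirDeriv e (C a) = 0 := by
  simp [dirDeriv]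

lemma dirDeriv_C_mul (e : Fin 2 → ℝ) (a : ℝ) (f : MvPolynomial (Fin 2) ℝ) :
    dirDeriv e (C a * f) = C a * dirDeriv e f := by
  simp only [dirDeriv, pderiv_C_mul]; ring

lemma dirDeriv_zero (e : Fin 2 → ℝ) : dirDeriv e (0 : MvPolynomial (Fin 2) ℝ) = 0 := by
  simp [dirDeriv]

lemma dirDeriv_sub (e : Fin 2 → ℝ) (f g : MvPolynomial (Fin 2) ℝ) :
    dirDeriv e (f - g) = dirDeriv e f - dirDeriv e g := by
  simp only [dirDeriv, map_sub]; ring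

lemma dirDeriv_neg (e : Fin 2 → ℝ) (f : MvPolynomial (Fin 2) ℝ) :
    dirDeriv e (-f) = -dirDeriv e f := by
  simp only [dirDeriv, map_neg]; ring

/-- Substitution of a parametrized line into a 2-variable polynomial. -/
noncomputable def lmap (b e : Fin 2 → ℝ) : MvPolynomial (Fin 2) ℝ →ₐ[ℝ] Polynomial ℝ :=
  aeval fun i => Polynomial.C (b i) + Polynomial.C (e i) * Polynomial.X

@[simp] lemma lmap_X (b e : Fin 2 → ℝ) (i : Fin 2) :
    lmap b e (X i) = Polynomial.C (b i) + Polynomial.C (e i) * Polynomial.X :=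
  aeval_X _ i

@[simp] lemma lmap_C (b e : Fin 2 → ℝ) (a : ℝ) : lmap b e (C a) = Polynomial.C a := by
  simp [lmap, algebraMap_eq]

lemma lmap_eval (b e : Fin 2 → ℝ) (f : MvPolynomial (Fin 2) ℝ) (t : ℝ) :
    (lmap b e f).eval t = eval (fun i => b i + t * e i) f := by
  induction f using MvPolynomial.induction_on with
  | C a => simp
  | add f g hf hg => simp only [map_add, Polynomial.eval_add, hf, hg, eval_add]
  | mul_X f i hf =>
      simp only [map_mul, Polynomial.eval_mul, hf, lmap_X, Polynomial.eval_add,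
        Polynomial.eval_mul, Polynomial.eval_C, Polynomial.eval_X, eval_mul, eval_X]
      ring

lemma lmap_dirDeriv (b e : Fin 2 → ℝ) (f : MvPolynomial (Fin 2) ℝ) :
    Polynomial.derivative (lmap b e f) = lmap b e (dirDeriv e f) := by
  induction f using MvPolynomial.induction_on with
  | C a => simp [dirDeriv_C]
  | add f g hf hg => simp only [map_add, dirDeriv_add, hf, hg]
  | mul_X f i hf =>
      have hX : dirDeriv e (f * X i) = dirDeriv e f * X i + C (e i) * f := by
        fin_cases i <;>
          · simp only [dirDeriv, pderiv_mul, pderiv_X_self, pderiv_X_of_ne, Fin.isValue,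
              mul_one, Matrix.cons_val_zero, Matrix.cons_val_one, Matrix.head_cons]
            simp [pderiv_X_of_ne]
            ring
      rw [hX]
      simp only [map_add, map_mul, lmap_X, lmap_C, Polynomial.derivative_mul,
        Polynomial.derivative_add, Polynomial.derivative_C, Polynomial.derivative_mul,
        Polynomial.derivative_X, hf]
      ring

lemma pderiv_comm (i j : Fin 2) (f : MvPolynomial (Fin 2) ℝ) :
    pderiv i (pderiv j f) = pderiv j (pderiv i f) := by
  induction f using MvPolynomial.induction_on' with
  | monomial s a =>
      rcases eq_or_ne i j with rfl | hij
      · rfl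
      · simp only [pderiv_monomial]
        have h1 : (s - Finsupp.single j 1 : Fin 2 →₀ ℕ) i = s i := by
          rw [Finsupp.tsub_apply, Finsupp.single_eq_of_ne hij]; rfl
        have h2 : (s - Finsupp.single i 1 : Fin 2 →₀ ℕ) j = s j := by
          rw [Finsupp.tsub_apply, Finsupp.single_eq_of_ne (Ne.symm hij)]; rfl
        have h3 : s - Finsupp.single j 1 - Finsupp.single i 1
            = s - Finsupp.single i 1 - Finsupp.single j 1 := by
          ext k; simp only [Finsupp.tsub_apply]; omega
        rw [h1, h2, h3]
        congr 1
        ring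
  | add p q hp hq => simp [hp, hq]

lemma totalDegree_pderiv_le (f : MvPolynomial (Fin 2) ℝ) (i : Fin 2) :
    (pderiv i f).totalDegree ≤ f.totalDegree - 1 := by
  conv_lhs => rw [f.as_sum]
  rw [map_sum]
  refine totalDegree_finsetSum_le ?_
  intro s hs
  rw [pderiv_monomial]
  by_cases h : s i = 0
  · simp [h]
  · refine (totalDegree_monomial_le _ _).trans ?_
    have hle := le_totalDegree hs
    have e1 : ∀ m : Fin 2 →₀ ℕ, (m.sum fun _ ↦ id) = m 0 + m 1 := by
      intro m
      rw [Finsupp.sum_fintype _ _ (fun _ => rfl), Fin.sum_univ_two]; rfl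
    have e2 : ∀ m : Fin 2 →₀ ℕ, (m.sum fun _ e => e) = m 0 + m 1 := by
      intro m
      rw [Finsupp.sum_fintype _ _ (fun _ => rfl), Fin.sum_univ_two]
    rw [e2] at hle
    rw [e1, Finsupp.tsub_apply, Finsupp.tsub_apply]
    fin_cases i <;> simp [Finsupp.single_apply] at h ⊢ <;> omega

lemma totalDegree_dirDeriv_le (e : Fin 2 → ℝ) (f : MvPolynomial (Fin 2) ℝ) :
    (dirDeriv e f).totalDegree ≤ f.totalDegree - 1 := by
  refine (totalDegree_add _ _).trans (max_le ?_ ?_) <;>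
    exact (totalDegree_mul _ _).trans
      (by simpa [totalDegree_C] using totalDegree_pderiv_le f _)

lemma eq_C_of_totalDegree_eq_zero {f : MvPolynomial (Fin 2) ℝ} (h : f.totalDegree = 0) :
    f = C (coeff 0 f) := by
  ext m
  rcases eq_or_ne m 0 with rfl | hm
  · simp
  · rw [coeff_C, if_neg (Ne.symm hm)]
    by_cases hmem : m ∈ f.support
    · exact absurd (Finsupp.ext fun x => (totalDegree_eq_zero_iff (Fin 2) f).mp h m hmem x) hm
    · simpa using hmem


section
variable (p d : Fin 2 → ℝ)

/-- vanishing on the whole line through `p` in direction `d`. -/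
def Van (f : MvPolynomial (Fin 2) ℝ) : Prop :=
  ∀ t : ℝ, eval (fun i => p i + t * d i) f = 0

variable {p d}

lemma van_iff {f : MvPolynomial (Fin 2) ℝ} : Van p d f ↔ lmap p d f = 0 := by
  constructor
  · intro h
    apply Polynomial.zero_of_eval_zero
    intro t
    rw [lmap_eval]
    exact h t
  · intro h t
    rw [← lmap_eval, h, Polynomial.eval_zero]

lemma van_of_Icc {f : MvPolynomial (Fin 2) ℝ}
    (h : ∀ t ∈ Set.Icc (0 : ℝ) 1, eval (fun i => p i + t * d i) f = 0) : Van p d f := by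
  rw [van_iff]
  apply Polynomial.eq_zero_of_infinite_isRoot
  refine (Set.Icc_infinite zero_lt_one).mono ?_
  intro t ht
  simp only [Set.mem_setOf_eq, Polynomial.IsRoot, lmap_eval]
  exact h t ht

lemma Van.dirDeriv_d {f : MvPolynomial (Fin 2) ℝ} (h : Van p d f) : Van p d (dirDeriv d f) := by
  rw [van_iff] at h ⊢
  rw [← lmap_dirDeriv, h, map_zero]

lemma Van.add {f g : MvPolynomial (Fin 2) ℝ} (hf : Van p d f) (hg : Van p d g) :
    Van p d (f + g) := by
  intro t; simp [hf t, hg t]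

lemma Van.neg {f : MvPolynomial (Fin 2) ℝ} (hf : Van p d f) : Van p d (-f) := by
  intro t; simp [hf t]

lemma Van.C_mul {f : MvPolynomial (Fin 2) ℝ} (a : ℝ) (hf : Van p d f) : Van p d (C a * f) := by
  intro t; simp [hf t]

lemma Van.of_C_mul {f : MvPolynomial (Fin 2) ℝ} {a : ℝ} (ha : a ≠ 0)
    (hf : Van p d (C a * f)) : Van p d f := by
  intro t
  have := hf t
  simp only [eval_mul, eval_C] at this
  exact (mul_eq_zero.mp this).resolve_left ha

variable (hd : d ≠ 0)

/-- the rotated direction -/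
lemma exists_components (hd : d ≠ 0) : d 0 ≠ 0 ∨ d 1 ≠ 0 := by
  by_contra hcon
  push_neg at hcon
  exact hd (funext fun i => by fin_cases i <;> simp [hcon.1, hcon.2])

/-- Step E : if the second derivative along `nn` vanishes identically and `f`, `∂ₙf` vanish
on the line, then `f = 0`. -/
lemma stepE {f : MvPolynomial (Fin 2) ℝ} (hd : d ≠ 0)
    (h2 : dirDeriv ![-d 1, d 0] (dirDeriv ![-d 1, d 0] f) = 0)
    (h0 : Van p d f) (h1 : Van p d (dirDeriv ![-d 1, d 0] f)) : f = 0 := by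
  set nn : Fin 2 → ℝ := ![-d 1, d 0] with hnn
  have hD : d 0 ^ 2 + d 1 ^ 2 ≠ 0 := by
    rcases exists_components hd with h | h <;> positivity
  apply (MvPolynomial.funext_iff (q := 0)).mpr
  intro x
  rw [map_zero]
  set D := d 0 ^ 2 + d 1 ^ 2 with hDdef
  set s := ((x 0 - p 0) * d 0 + (x 1 - p 1) * d 1) / D with hs
  set t := (-(x 0 - p 0) * d 1 + (x 1 - p 1) * d 0) / D with ht
  set b : Fin 2 → ℝ := fun i => p i + s * d i with hb
  have hx : (fun i => b i + t * nn i) = x := by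
    funext i
    fin_cases i <;>
      · simp only [hb, hnn, hs, ht, Fin.zero_eta, Fin.mk_one, Fin.isValue, Matrix.cons_val_zero, Matrix.cons_val_one, Matrix.head_cons]
        field_simp
        rw [hDdef]; ring
  have hP2 : Polynomial.derivative (Polynomial.derivative (lmap b nn f)) = 0 := by
    rw [lmap_dirDeriv, lmap_dirDeriv, h2, map_zero]
  have hPder : Polynomial.derivative (lmap b nn f)
      = Polynomial.C ((Polynomial.derivative (lmap b nn f)).coeff 0) :=
    Polynomial.eq_C_of_natDegree_eq_zero
      (Polynomial.natDegree_eq_zero_of_derivative_eq_zero hP2)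
  have hc0 : (Polynomial.derivative (lmap b nn f)).coeff 0 = 0 := by
    have := h1 s
    have hb0 : (fun i => b i + 0 * nn i) = fun i => p i + s * d i := by
      funext i; simp [hb]
    have heval : (Polynomial.derivative (lmap b nn f)).eval 0 = 0 := by
      rw [lmap_dirDeriv, lmap_eval, hb0]
      exact this
    rwa [hPder, Polynomial.eval_C] at heval
  have hPder0 : Polynomial.derivative (lmap b nn f) = 0 := by rw [hPder, hc0, map_zero]
  have hP : lmap b nn f = Polynomial.C ((lmap b nn f).coeff 0) :=
    Polynomial.eq_C_of_natDegree_eq_zero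
      (Polynomial.natDegree_eq_zero_of_derivative_eq_zero hPder0)
  have hb0 : (fun i => b i + 0 * nn i) = fun i => p i + s * d i := by
    funext i; simp [hb]
  have h00 : (lmap b nn f).eval 0 = 0 := by
    rw [lmap_eval, hb0]
    exact h0 s
  rw [hP, Polynomial.eval_C] at h00
  calc eval x f = (lmap b nn f).eval t := by rw [lmap_eval, hx]
    _ = 0 := by rw [hP, Polynomial.eval_C, h00]

lemma dirDeriv_comm (a e : Fin 2 → ℝ) (f : MvPolynomial (Fin 2) ℝ) :
    dirDeriv a (dirDeriv e f) = dirDeriv e (dirDeriv a f) := by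
  have h := pderiv_comm 0 1 f
  simp only [dirDeriv, map_add, pderiv_C_mul]
  linear_combination (C (a 0) * C (e 1) - C (a 1) * C (e 0)) * h

lemma dirDeriv_comm3 (a e : Fin 2 → ℝ) (f : MvPolynomial (Fin 2) ℝ) :
    dirDeriv e (dirDeriv a (dirDeriv a f)) = dirDeriv a (dirDeriv a (dirDeriv e f)) := by
  rw [dirDeriv_comm e a (dirDeriv a f), dirDeriv_comm e a f]

lemma dirDeriv_comm4 (a e : Fin 2 → ℝ) (f : MvPolynomial (Fin 2) ℝ) :
    dirDeriv a (dirDeriv a (dirDeriv e (dirDeriv e f)))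
      = dirDeriv e (dirDeriv e (dirDeriv a (dirDeriv a f))) := by
  rw [dirDeriv_comm a e (dirDeriv e f), dirDeriv_comm a e (dirDeriv a (dirDeriv e f)),
    dirDeriv_comm a e f, dirDeriv_comm a e (dirDeriv a f)]

/-- The key lemma: "harmonic" + vanishing of `f` and its normal derivative on a line imply
`f = 0`. -/
lemma key (hd : d ≠ 0) :
    ∀ N (f : MvPolynomial (Fin 2) ℝ), f.totalDegree ≤ N →
      dirDeriv d (dirDeriv d f) + dirDeriv ![-d 1, d 0] (dirDeriv ![-d 1, d 0] f) = 0 →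
      Van p d f → Van p d (dirDeriv ![-d 1, d 0] f) → f = 0 := by
  intro N
  induction N with
  | zero =>
      intro f hdeg _ h0 _
      rw [eq_C_of_totalDegree_eq_zero (Nat.le_zero.mp hdeg)]
      have := h0 0
      rw [eq_C_of_totalDegree_eq_zero (Nat.le_zero.mp hdeg), eval_C] at this
      rw [this, map_zero]
  | succ N ih =>
      intro f hdeg hharm h0 h1
      set nn : Fin 2 → ℝ := ![-d 1, d 0] with hnn
      set g := dirDeriv nn (dirDeriv nn f) with hg
      have hgdd : g = -(dirDeriv d (dirDeriv d f)) := by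
        rw [hg, ← sub_eq_zero]
        rw [sub_neg_eq_add, add_comm]
        exact hharm
      have hgdeg : g.totalDegree ≤ N := by
        calc g.totalDegree ≤ (dirDeriv nn f).totalDegree - 1 := totalDegree_dirDeriv_le _ _
          _ ≤ (f.totalDegree - 1) - 1 := by
              exact Nat.sub_le_sub_right (totalDegree_dirDeriv_le _ _) 1
          _ ≤ N := by omega
      have hgharm : dirDeriv d (dirDeriv d g) + dirDeriv nn (dirDeriv nn g) = 0 := by
        have := congrArg (fun h => dirDeriv nn (dirDeriv nn h)) hharm
        simp only [dirDeriv_add, map_zero] at this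
        calc dirDeriv d (dirDeriv d g) + dirDeriv nn (dirDeriv nn g)
            = dirDeriv nn (dirDeriv nn (dirDeriv d (dirDeriv d f)))
              + dirDeriv nn (dirDeriv nn (dirDeriv nn (dirDeriv nn f))) := by
              rw [hg, dirDeriv_comm4 d nn]
          _ = dirDeriv nn (dirDeriv nn (dirDeriv d (dirDeriv d f)
                + dirDeriv nn (dirDeriv nn f))) := by rw [dirDeriv_add, dirDeriv_add]
          _ = 0 := by rw [hharm, dirDeriv_zero, dirDeriv_zero]
      have hVg : Van p d g := by
        rw [hgdd]
        exact (h0.dirDeriv_d.dirDeriv_d).neg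
      have hVng : Van p d (dirDeriv nn g) := by
        have hcomm : dirDeriv nn g = -(dirDeriv d (dirDeriv d (dirDeriv nn f))) := by
          rw [hgdd, dirDeriv_neg, dirDeriv_comm3 d nn]
        rw [hcomm]
        exact (h1.dirDeriv_d.dirDeriv_d).neg
      have hg0 : g = 0 := ih g hgdeg hgharm hVg hVng
      exact stepE hd hg0 h0 h1


lemma eval_line_const (b e : Fin 2 → ℝ) (f : MvPolynomial (Fin 2) ℝ)
    (h : dirDeriv e f = 0) (t : ℝ) :
    eval (fun i => b i + t * e i) f = eval b f := by
  have hP : Polynomial.derivative (lmap b e f) = 0 := by rw [lmap_dirDeriv, h, map_zero]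
  have hC := Polynomial.eq_C_of_natDegree_eq_zero
    (Polynomial.natDegree_eq_zero_of_derivative_eq_zero hP)
  have h1 : (lmap b e f).eval t = (lmap b e f).eval 0 := by rw [hC]; simp
  have hb0 : (fun i => b i + 0 * e i) = b := by funext i; ring
  rw [← lmap_eval, h1, lmap_eval, hb0]

lemma exists_C (q : MvPolynomial (Fin 2) ℝ) (h0 : pderiv 0 q = 0) (h1 : pderiv 1 q = 0) :
    ∃ c : ℝ, q = C c := by
  refine ⟨eval (fun _ => 0) q, MvPolynomial.funext fun y => ?_⟩
  have d1 : dirDeriv ![0, 1] q = 0 := by simp [dirDeriv, h1]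
  have d0 : dirDeriv ![1, 0] q = 0 := by simp [dirDeriv, h0]
  have s1 : eval y q = eval ![y 0, 0] q := by
    have hy : (fun i => (![y 0, 0] : Fin 2 → ℝ) i + y 1 * (![0, 1] : Fin 2 → ℝ) i) = y := by
      funext i; fin_cases i <;> simp
    have h := eval_line_const ![y 0, 0] ![0, 1] q d1 (y 1)
    rwa [hy] at h
  have s2 : eval ![y 0, 0] q = eval ![(0:ℝ), 0] q := by
    have hy : (fun i => (![(0:ℝ), 0] : Fin 2 → ℝ) i + y 0 * (![1, 0] : Fin 2 → ℝ) i)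
        = ![y 0, 0] := by
      funext i; fin_cases i <;> simp
    have h := eval_line_const ![(0:ℝ), 0] ![1, 0] q d0 (y 0)
    rwa [hy] at h
  have s3 : eval ![(0:ℝ), 0] q = eval (fun _ => (0:ℝ)) q := by
    have : (![(0:ℝ), 0] : Fin 2 → ℝ) = fun _ => 0 := by funext i; fin_cases i <;> simp
    rw [this]
  rw [s1, s2, s3, eval_C]

end
end EdgeAux


open EdgeAux

/-- Lemma 3.1 of the paper (2D case): if a polynomial velocity field `v = (v₁, v₂)` vanishes
together with its first and second normal derivatives on a segment `{p + t d : t ∈ [0,1]}`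
(with normal direction `n ⊥ d`), and `−Δv + ∇q = 0`, `div v = 0` hold identically, then
`v = 0` and `q` is constant. -/
theorem polynomial_stokes_vanishing_on_edge
    (v₁ v₂ q : MvPolynomial (Fin 2) ℝ) (p d n : Fin 2 → ℝ)
    (hd : d ≠ 0) (hn : n ≠ 0)
    (hdn : d 0 * n 0 + d 1 * n 1 = 0)
    (hv : ∀ t ∈ Set.Icc (0 : ℝ) 1,
      eval (fun i => p i + t * d i) v₁ = 0 ∧ eval (fun i => p i + t * d i) v₂ = 0)
    (hv' : ∀ t ∈ Set.Icc (0 : ℝ) 1,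
      eval (fun i => p i + t * d i) (dirDeriv n v₁) = 0 ∧
      eval (fun i => p i + t * d i) (dirDeriv n v₂) = 0)
    (hv'' : ∀ t ∈ Set.Icc (0 : ℝ) 1,
      eval (fun i => p i + t * d i) (dirDeriv n (dirDeriv n v₁)) = 0 ∧
      eval (fun i => p i + t * d i) (dirDeriv n (dirDeriv n v₂)) = 0)
    (hstokes₁ : -(pderiv 0 (pderiv 0 v₁) + pderiv 1 (pderiv 1 v₁)) + pderiv 0 q = 0)
    (hstokes₂ : -(pderiv 0 (pderiv 0 v₂) + pderiv 1 (pderiv 1 v₂)) + pderiv 1 q = 0)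
    (hdiv : pderiv 0 v₁ + pderiv 1 v₂ = 0) :
    v₁ = 0 ∧ v₂ = 0 ∧ ∃ c : ℝ, q = C c := by
  set nn : Fin 2 → ℝ := ![-d 1, d 0] with hnn
  have hD : (d 0 ^ 2 + d 1 ^ 2 : ℝ) ≠ 0 := by
    rcases exists_components hd with h | h <;> positivity
  -- `n` is a nonzero multiple of the rotated direction `nn`.
  obtain ⟨c, hc, hcn⟩ : ∃ c : ℝ, c ≠ 0 ∧ ∀ i, n i = c * nn i := by
    have hnval : ∀ i : Fin 2, (i = 0 → nn i = -d 1) ∧ (i = 1 → nn i = d 0) := by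
      intro i; constructor <;> rintro rfl <;> simp [hnn]
    rcases eq_or_ne (d 0) 0 with h0 | h0
    · have hd1 : d 1 ≠ 0 := by rcases exists_components hd with h | h; exact absurd h0 (by simpa using h); exact h
      have hn1 : n 1 = 0 := by
        have : d 1 * n 1 = 0 := by rw [h0] at hdn; linarith
        exact (mul_eq_zero.mp this).resolve_left hd1
      have hn0 : n 0 ≠ 0 := by
        intro h
        exact hn (funext fun i => by fin_cases i <;> simp [h, hn1])
      refine ⟨-(n 0) / d 1, by simp [hn0, hd1], fun i => ?_⟩
      fin_cases i
      · show n 0 = -(n 0) / d 1 * nn 0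
        rw [(hnval 0).1 rfl]; field_simp
      · show n 1 = -(n 0) / d 1 * nn 1
        rw [(hnval 1).2 rfl, h0, hn1]; ring
    · have hn1 : n 1 ≠ 0 := by
        intro h
        have : d 0 * n 0 = 0 := by rw [h] at hdn; linarith
        have hn0 : n 0 = 0 := (mul_eq_zero.mp this).resolve_left h0
        exact hn (funext fun i => by fin_cases i <;> simp [h, hn0])
      refine ⟨n 1 / d 0, by simp [hn1, h0], fun i => ?_⟩
      fin_cases i
      · show n 0 = n 1 / d 0 * nn 0
        rw [(hnval 0).1 rfl]
        field_simp
        nlinarith [hdn]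
      · show n 1 = n 1 / d 0 * nn 1
        rw [(hnval 1).2 rfl]; field_simp
  have hNd : ∀ f, dirDeriv n f = C c * dirDeriv nn f := by
    intro f
    simp only [dirDeriv]
    rw [hcn 0, hcn 1, map_mul, map_mul]
    ring
  -- vanishing data on the full line
  have hVv1 : Van p d v₁ := van_of_Icc fun t ht => (hv t ht).1
  have hVv2 : Van p d v₂ := van_of_Icc fun t ht => (hv t ht).2
  have hVn1 : Van p d (dirDeriv nn v₁) := by
    have h := van_of_Icc (f := dirDeriv n v₁) fun t ht => (hv' t ht).1
    rw [hNd] at h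
    exact h.of_C_mul hc
  have hVn2 : Van p d (dirDeriv nn v₂) := by
    have h := van_of_Icc (f := dirDeriv n v₂) fun t ht => (hv' t ht).2
    rw [hNd] at h
    exact h.of_C_mul hc
  have hVn21 : Van p d (dirDeriv nn (dirDeriv nn v₁)) := by
    have h := van_of_Icc (f := dirDeriv n (dirDeriv n v₁)) fun t ht => (hv'' t ht).1
    rw [hNd, hNd, dirDeriv_C_mul] at h
    exact (h.of_C_mul hc).of_C_mul hc
  have hVn22 : Van p d (dirDeriv nn (dirDeriv nn v₂)) := by
    have h := van_of_Icc (f := dirDeriv n (dirDeriv n v₂)) fun t ht => (hv'' t ht).2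
    rw [hNd, hNd, dirDeriv_C_mul] at h
    exact (h.of_C_mul hc).of_C_mul hc
  -- transfer identities
  have hID : ∀ f, dirDeriv d (dirDeriv d f) + dirDeriv nn (dirDeriv nn f)
      = C (d 0 ^ 2 + d 1 ^ 2) * (pderiv 0 (pderiv 0 f) + pderiv 1 (pderiv 1 f)) := by
    intro f
    simp only [dirDeriv]
    simp only [map_add, pderiv_C_mul]
    simp only [hnn, Matrix.cons_val_zero, Matrix.cons_val_one, Matrix.head_cons,
      map_neg, map_pow, map_add]
    ring
  have hrec0 : ∀ f, C (d 0 ^ 2 + d 1 ^ 2) * pderiv 0 f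
      = C (d 0) * dirDeriv d f - C (d 1) * dirDeriv nn f := by
    intro f
    simp only [dirDeriv, hnn, Matrix.cons_val_zero, Matrix.cons_val_one, Matrix.head_cons,
      map_add, map_neg, map_pow]
    ring
  have hrec1 : ∀ f, C (d 0 ^ 2 + d 1 ^ 2) * pderiv 1 f
      = C (d 1) * dirDeriv d f + C (d 0) * dirDeriv nn f := by
    intro f
    simp only [dirDeriv, hnn, Matrix.cons_val_zero, Matrix.cons_val_one, Matrix.head_cons,
      map_add, map_neg, map_pow]
    ring
  -- the vorticity
  set ω := pderiv 0 v₂ - pderiv 1 v₁ with hw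
  have hcomb : C (d 0 ^ 2 + d 1 ^ 2) * ω
      = C (d 0) * dirDeriv d v₂ - C (d 1) * dirDeriv nn v₂
        - C (d 1) * dirDeriv d v₁ - C (d 0) * dirDeriv nn v₁ := by
    rw [hw]
    linear_combination hrec0 v₂ - hrec1 v₁
  have hVω : Van p d ω := by
    refine Van.of_C_mul hD ?_
    intro t
    rw [hcomb]
    simp [hVv1.dirDeriv_d t, hVv2.dirDeriv_d t, hVn1 t, hVn2 t]
  have hVnω : Van p d (dirDeriv nn ω) := by
    refine Van.of_C_mul hD ?_
    have hcomb2 := congrArg (dirDeriv nn) hcomb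
    simp only [dirDeriv_sub, dirDeriv_C_mul] at hcomb2
    rw [dirDeriv_comm nn d v₂, dirDeriv_comm nn d v₁] at hcomb2
    intro t
    rw [hcomb2]
    simp [(hVn2.dirDeriv_d) t, (hVn1.dirDeriv_d) t, hVn21 t, hVn22 t]
  have hharmω : dirDeriv d (dirDeriv d ω) + dirDeriv nn (dirDeriv nn ω) = 0 := by
    rw [hID ω]
    have hA : pderiv 0 (pderiv 1 (pderiv 1 v₂)) = pderiv 1 (pderiv 1 (pderiv 0 v₂)) := by
      rw [pderiv_comm 0 1 (pderiv 1 v₂), pderiv_comm 0 1 v₂]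
    have hB : pderiv 1 (pderiv 0 (pderiv 0 v₁)) = pderiv 0 (pderiv 0 (pderiv 1 v₁)) := by
      rw [pderiv_comm 1 0 (pderiv 0 v₁), pderiv_comm 1 0 v₁]
    have hC' : pderiv 0 (pderiv 1 q) = pderiv 1 (pderiv 0 q) := pderiv_comm 0 1 q
    have e1 := congrArg (pderiv 1) hstokes₁
    have e2 := congrArg (pderiv 0) hstokes₂
    simp only [map_add, map_neg, map_sub, map_zero] at e1 e2
    simp only [hw, map_sub]
    linear_combination C (d 0 ^ 2 + d 1 ^ 2) * (-e2 + e1 - hA + hB + hC')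
  have hω0 : ω = 0 := key hd ω.totalDegree ω le_rfl hharmω hVω hVnω
  -- both components are harmonic
  have hharm1 : dirDeriv d (dirDeriv d v₁) + dirDeriv nn (dirDeriv nn v₁) = 0 := by
    rw [hID v₁]
    have e3 := congrArg (pderiv 0) hdiv
    have e4 := congrArg (pderiv 1) hω0
    have hcm : pderiv 0 (pderiv 1 v₂) = pderiv 1 (pderiv 0 v₂) := pderiv_comm 0 1 v₂
    simp only [map_add, map_sub, map_zero, hw] at e3 e4
    linear_combination C (d 0 ^ 2 + d 1 ^ 2) * (e3 - hcm - e4)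
  have hharm2 : dirDeriv d (dirDeriv d v₂) + dirDeriv nn (dirDeriv nn v₂) = 0 := by
    rw [hID v₂]
    have e5 := congrArg (pderiv 1) hdiv
    have e6 := congrArg (pderiv 0) hω0
    have hcm : pderiv 0 (pderiv 1 v₁) = pderiv 1 (pderiv 0 v₁) := pderiv_comm 0 1 v₁
    simp only [map_add, map_sub, map_zero, hw] at e5 e6
    linear_combination C (d 0 ^ 2 + d 1 ^ 2) * (e6 + hcm + e5)
  have hv10 : v₁ = 0 := key hd v₁.totalDegree v₁ le_rfl hharm1 hVv1 hVn1
  have hv20 : v₂ = 0 := key hd v₂.totalDegree v₂ le_rfl hharm2 hVv2 hVn2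
  have hq0 : pderiv 0 q = 0 := by
    rw [hv10] at hstokes₁
    simpa using hstokes₁
  have hq1 : pderiv 1 q = 0 := by
    rw [hv20] at hstokes₂
    simpa using hstokes₂
  exact ⟨hv10, hv20, exists_C q hq0 hq1⟩
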